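/- arXiv:2408.11116 — 5 statements merged into one kernel-verified Lean document; each statement's English description precedes it below -/
import Mathlib

section
/- Let λ^(1), λ^(2), μ, ν be integer partitions of n with λ^(1) ⪯ λ^(2) in the dominance order. If there exists a three-dimensional binary contingency table with marginals (λ^(2), μ, ν), then there exists one with marginals (λ^(1), μ, ν). -/
open Finset

/-- An integer partition of `n`: a non-increasing, finitely supported sequence
of non-negative integers summing to `n` (indexed from 0). -/
def IsPartition (l : ℕ → ℕ) (n : ℕ) : Prop :=
  Antitone l ∧ ∃ N, (∀ i, N ≤ i → l i = 0) ∧ ∑ i ∈ Finset.range N, l i = n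

/-- Dominance order: `l ⪯ m`. -/
def DomLE (l m : ℕ → ℕ) : Prop :=
  ∀ k, ∑ i ∈ Finset.range k, l i ≤ ∑ i ∈ Finset.range k, m i

/-- Strict dominance. -/
def DomLT (l m : ℕ → ℕ) : Prop := DomLE l m ∧ l ≠ m

/-- A three-dimensional binary contingency table is identified with its (finite)
set of 1-entries.  `HasMarginals S l m v` says the marginals of the table `S`
are `l`, `m`, `v`. -/
def HasMarginals (S : Finset (ℕ × ℕ × ℕ)) (l m v : ℕ → ℕ) : Prop :=
  (∀ i, (S.filter fun p => p.1 = i).card = l i) ∧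
  (∀ j, (S.filter fun p => p.2.1 = j).card = m j) ∧
  (∀ k, (S.filter fun p => p.2.2 = k).card = v k)

/-- Conjugate partition (0-indexed): `conj l r = |{j : l j ≥ r+1}|`. -/
noncomputable def conj (l : ℕ → ℕ) (r : ℕ) : ℕ := Set.ncard {j | r + 1 ≤ l j}

/-- A pyramid: a downward-closed binary contingency table. -/
def IsPyramid (S : Finset (ℕ × ℕ × ℕ)) : Prop :=
  ∀ i1 j1 k1 i2 j2 k2 : ℕ, i1 ≤ i2 → j1 ≤ j2 → k1 ≤ k2 →
    (i2, j2, k2) ∈ S → (i1, j1, k1) ∈ S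

/-- Degree of a vertex in a hypergraph on vertex set `ℕ` given by its edge set. -/
def hdeg (E : Finset (Finset ℕ)) (v : ℕ) : ℕ := (E.filter fun e => v ∈ e).card

/-- `DegSeqOf E l`: the non-increasingly sorted degree sequence of the
hypergraph with edge set `E` is `l` (i.e. the degrees are `l` up to a
relabelling of the vertices). -/
def DegSeqOf (E : Finset (Finset ℕ)) (l : ℕ → ℕ) : Prop :=
  ∃ e : ℕ ≃ ℕ, ∀ v, hdeg E (e v) = l v

/-- Size of the largest Durfee square of `m` (0-indexed parts). -/
noncomputable def Durfee (m : ℕ → ℕ) : ℕ := sSup {k | ∀ i < k, i + 1 ≤ m i}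

private lemma card_move {α : Type*} [DecidableEq α] (S : Finset α) (pa pb : α)
    (hpa : pa ∈ S) (hpb : pb ∉ S) (P : α → Prop) [DecidablePred P] :
    ((insert pb (S.erase pa)).filter P).card
      = (S.filter P).card + (if P pb then 1 else 0) - (if P pa then 1 else 0) := by
  have hpb' : pb ∉ (S.filter P).erase pa := fun h =>
    hpb (Finset.mem_filter.1 (Finset.mem_of_mem_erase h)).1
  rw [Finset.filter_insert, Finset.filter_erase]
  by_cases hPb : P pb <;> by_cases hPa : P pa
  · have hmem : pa ∈ S.filter P := Finset.mem_filter.2 ⟨hpa, hPa⟩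
    have h1 : 1 ≤ (S.filter P).card := Finset.card_pos.2 ⟨pa, hmem⟩
    rw [if_pos hPb, Finset.card_insert_of_notMem hpb',
      Finset.card_erase_of_mem hmem, if_pos hPb, if_pos hPa]
    omega
  · have hnm : pa ∉ S.filter P := fun h => hPa (Finset.mem_filter.1 h).2
    rw [if_pos hPb, Finset.card_insert_of_notMem hpb',
      Finset.erase_eq_of_notMem hnm, if_pos hPb, if_neg hPa]
    omega
  · have hmem : pa ∈ S.filter P := Finset.mem_filter.2 ⟨hpa, hPa⟩
    rw [if_neg hPb, Finset.card_erase_of_mem hmem, if_neg hPb, if_pos hPa]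
    omega
  · have hnm : pa ∉ S.filter P := fun h => hPa (Finset.mem_filter.1 h).2
    rw [if_neg hPb, Finset.erase_eq_of_notMem hnm, if_neg hPb, if_neg hPa]
    omega

lemma move_marg (l m v : ℕ → ℕ) (a b : ℕ) (hab : a ≠ b) (hgt : l b < l a)
    (S : Finset (ℕ × ℕ × ℕ)) (hS : HasMarginals S l m v) :
    ∃ S' : Finset (ℕ × ℕ × ℕ),
      HasMarginals S' (fun i => if i = a then l a - 1 else if i = b then l b + 1 else l i) m v := by
  obtain ⟨h1, h2, h3⟩ := hS
  have hinjA : Set.InjOn Prod.snd ((S.filter fun p => p.1 = a) : Set (ℕ × ℕ × ℕ)) := by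
    intro p hp q hq hpq
    simp only [Finset.coe_filter, Set.mem_setOf_eq] at hp hq
    have hp1 : p.1 = a := hp.2
    have hq1 : q.1 = a := hq.2
    exact Prod.ext (hp1.trans hq1.symm) hpq
  have hcardA : ((S.filter fun p => p.1 = a).image Prod.snd).card = l a := by
    rw [Finset.card_image_of_injOn hinjA, h1]
  have hcardB : ((S.filter fun p => p.1 = b).image Prod.snd).card ≤ l b := by
    calc _ ≤ (S.filter fun p => p.1 = b).card := Finset.card_image_le
    _ = l b := h1 b
  have hns : ¬ ((S.filter fun p => p.1 = a).image Prod.snd ⊆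
      (S.filter fun p => p.1 = b).image Prod.snd) := by
    intro hsub
    have := Finset.card_le_card hsub
    omega
  obtain ⟨q, hqA, hqB⟩ := Finset.not_subset.1 hns
  obtain ⟨p, hp, hpq⟩ := Finset.mem_image.1 hqA
  have hp1 : p.1 = a := (Finset.mem_filter.1 hp).2
  have hpa_mem : (a, q) ∈ S := by
    have : p = (a, q) := Prod.ext hp1 hpq
    exact this ▸ (Finset.mem_filter.1 hp).1
  have hpb_mem : (b, q) ∉ S := by
    intro hmem
    exact hqB (Finset.mem_image.2 ⟨(b, q), Finset.mem_filter.2 ⟨hmem, rfl⟩, rfl⟩)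
  refine ⟨insert (b, q) (S.erase (a, q)), ?_, ?_, ?_⟩
  · intro i
    rw [card_move S (a,q) (b,q) hpa_mem hpb_mem (fun p => p.1 = i), h1]
    simp only
    rcases eq_or_ne i a with rfl | hia
    · simp [Ne.symm hab]
    · rcases eq_or_ne i b with rfl | hib
      · simp [hia, Ne.symm hia]
      · simp [hia, hib, Ne.symm hia, Ne.symm hib]
  · intro j
    rw [card_move S (a,q) (b,q) hpa_mem hpb_mem (fun p => p.2.1 = j), h2]
    simp only
    omega
  · intro k
    rw [card_move S (a,q) (b,q) hpa_mem hpb_mem (fun p => p.2.2 = k), h3]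
    simp only
    omega


private lemma main_ind (m v : ℕ → ℕ) (n N : ℕ) (l1 : ℕ → ℕ) (h1anti : Antitone l1)
    (h1z : ∀ i, N ≤ i → l1 i = 0) (h1s : ∑ i ∈ Finset.range N, l1 i = n) :
    ∀ D : ℕ, ∀ l2 : ℕ → ℕ, (∀ i, N ≤ i → l2 i = 0) → (∑ i ∈ Finset.range N, l2 i = n) →
      DomLE l1 l2 →
      (∑ k ∈ Finset.range (N+1),
        (∑ i ∈ Finset.range k, l2 i - ∑ i ∈ Finset.range k, l1 i)) ≤ D →
      (∃ S, HasMarginals S l2 m v) → ∃ S, HasMarginals S l1 m v := by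
  intro D
  induction D with
  | zero =>
    intro l2 h2z h2s hdom hmeas hS
    -- measure is zero, so l1 = l2
    have heq : l1 = l2 := by
      have hterm : ∀ k ∈ Finset.range (N+1),
          (∑ i ∈ Finset.range k, l2 i - ∑ i ∈ Finset.range k, l1 i) = 0 := by
        intro k hk
        have := Finset.sum_eq_zero_iff.1 (Nat.le_zero.1 hmeas) k hk
        exact this
      have hps : ∀ k, k ≤ N → ∑ i ∈ Finset.range k, l1 i = ∑ i ∈ Finset.range k, l2 i := by
        intro k hk
        have h0 := hterm k (Finset.mem_range.2 (by omega))
        have := hdom k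
        omega
      funext i
      by_cases hi : i < N
      · have e1 := hps i (by omega)
        have e2 := hps (i+1) (by omega)
        rw [Finset.sum_range_succ, Finset.sum_range_succ] at e2
        omega
      · rw [h1z i (by omega), h2z i (by omega)]
    rw [heq]; exact hS
  | succ D ih =>
    intro l2 h2z h2s hdom hmeas hS
    by_cases heq : l1 = l2
    · rw [heq]; exact hS
    · -- find first index a where they differ
      have hane : ∃ i, l1 i ≠ l2 i := Function.ne_iff.1 heq
      set a := Nat.find hane with ha_def
      have ha : l1 a ≠ l2 a := Nat.find_spec hane
      have hamin : ∀ i, i < a → l1 i = l2 i := fun i hi => by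
        have := Nat.find_min hane hi; simpa using this
      have hal : l1 a < l2 a := by
        have hd := hdom (a+1)
        rw [Finset.sum_range_succ, Finset.sum_range_succ] at hd
        have : ∑ i ∈ Finset.range a, l1 i = ∑ i ∈ Finset.range a, l2 i :=
          Finset.sum_congr rfl fun i hi => hamin i (Finset.mem_range.1 hi)
        omega
      have haN : a < N := by
        by_contra hc
        exact ha (by rw [h1z a (by omega), h2z a (by omega)])
      -- find index b where l2 < l1
      have hbne : ∃ i, l2 i < l1 i := by
        by_contra hc
        push_neg at hc
        have : ∑ i ∈ Finset.range N, l1 i < ∑ i ∈ Finset.range N, l2 i :=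
          Finset.sum_lt_sum (fun i _ => hc i) ⟨a, Finset.mem_range.2 haN, hal⟩
        omega
      set b := Nat.find hbne with hb_def
      have hb : l2 b < l1 b := Nat.find_spec hbne
      have hbmin : ∀ i, i < b → l1 i ≤ l2 i := fun i hi => by
        have := Nat.find_min hbne hi; omega
      have hab : a < b := by
        rcases lt_trichotomy a b with h | h | h
        · exact h
        · exfalso; rw [h] at hal; omega
        · have := hamin b h; omega
      have hbN : b < N := by
        by_contra hc
        have := h1z b (by omega)
        omega
      have hl2ab : l2 b < l2 a := by
        have := h1anti (le_of_lt hab)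
        omega
      -- the new second partition
      set l2' : ℕ → ℕ :=
        fun i => if i = a then l2 a - 1 else if i = b then l2 b + 1 else l2 i with hl2'_def
      have hl2a1 : 1 ≤ l2 a := by omega
      have hrel : ∀ k, (∑ i ∈ Finset.range k, l2' i) + (if a < k then 1 else 0)
          = (∑ i ∈ Finset.range k, l2 i) + (if b < k then 1 else 0) := by
        intro k
        induction k with
        | zero => simp
        | succ k ihk =>
          rw [Finset.sum_range_succ, Finset.sum_range_succ]
          have habne : a ≠ b := by omega
          by_cases hka : k = a
          · subst hka
            simp only [hl2'_def, if_pos rfl] at *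
            split_ifs at * <;> omega
          · by_cases hkb : k = b
            · subst hkb
              simp only [hl2'_def, if_neg hka, if_pos rfl] at *
              split_ifs at * <;> omega
            · simp only [hl2'_def, if_neg hka, if_neg hkb] at *
              split_ifs at * <;> omega
      -- middle-range dominance step
      have hstep : ∀ k, a < k → k ≤ b →
          (∑ i ∈ Finset.range k, l1 i) + 1 ≤ ∑ i ∈ Finset.range k, l2 i := by
        intro k hk1 hk2
        have e1 : (∑ i ∈ Finset.Ico 0 (a+1), l1 i) + ∑ i ∈ Finset.Ico (a+1) k, l1 i
            = ∑ i ∈ Finset.Ico 0 k, l1 i :=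
          Finset.sum_Ico_consecutive _ (by omega) (by omega)
        have e2 : (∑ i ∈ Finset.Ico 0 (a+1), l2 i) + ∑ i ∈ Finset.Ico (a+1) k, l2 i
            = ∑ i ∈ Finset.Ico 0 k, l2 i :=
          Finset.sum_Ico_consecutive _ (by omega) (by omega)
        have hmid : ∑ i ∈ Finset.Ico (a+1) k, l1 i ≤ ∑ i ∈ Finset.Ico (a+1) k, l2 i := by
          apply Finset.sum_le_sum
          intro i hi
          have hi' := Finset.mem_Ico.1 hi
          exact hbmin i (by omega)
        have hhead : (∑ i ∈ Finset.Ico 0 (a+1), l1 i) + 1 ≤ ∑ i ∈ Finset.Ico 0 (a+1), l2 i := by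
          rw [← Finset.range_eq_Ico, Finset.sum_range_succ, Finset.sum_range_succ]
          have : ∑ i ∈ Finset.range a, l1 i = ∑ i ∈ Finset.range a, l2 i :=
            Finset.sum_congr rfl fun i hi => hamin i (Finset.mem_range.1 hi)
          omega
        rw [Finset.range_eq_Ico]
        omega
      -- invariants for l2'
      have h2z' : ∀ i, N ≤ i → l2' i = 0 := by
        intro i hi
        have : i ≠ a := by omega
        have : i ≠ b := by omega
        simp only [hl2'_def]
        rw [if_neg (by omega), if_neg (by omega)]
        exact h2z i hi
      have h2s' : ∑ i ∈ Finset.range N, l2' i = n := by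
        have := hrel N
        rw [if_pos (by omega : a < N), if_pos (by omega : b < N)] at this
        omega
      have hdom' : DomLE l1 l2' := by
        intro k
        have hr := hrel k
        by_cases hak : a < k
        · by_cases hbk : b < k
          · rw [if_pos hak, if_pos hbk] at hr
            have := hdom k
            omega
          · rw [if_pos hak, if_neg hbk] at hr
            have := hstep k hak (by omega)
            omega
        · have hbk : ¬ b < k := by omega
          rw [if_neg hak, if_neg hbk] at hr
          have := hdom k
          omega
      have hmeas' : (∑ k ∈ Finset.range (N+1),
          (∑ i ∈ Finset.range k, l2' i - ∑ i ∈ Finset.range k, l1 i)) ≤ D := by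
        have hlt : (∑ k ∈ Finset.range (N+1),
            (∑ i ∈ Finset.range k, l2' i - ∑ i ∈ Finset.range k, l1 i))
            < ∑ k ∈ Finset.range (N+1),
            (∑ i ∈ Finset.range k, l2 i - ∑ i ∈ Finset.range k, l1 i) := by
          apply Finset.sum_lt_sum
          · intro k _
            have hr := hrel k
            have : ∑ i ∈ Finset.range k, l2' i ≤ ∑ i ∈ Finset.range k, l2 i := by
              split_ifs at hr <;> omega
            omega
          · refine ⟨a+1, Finset.mem_range.2 (by omega), ?_⟩
            have hr := hrel (a+1)
            rw [if_pos (by omega), if_neg (by omega)] at hr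
            have := hstep (a+1) (by omega) (by omega)
            omega
        omega
      obtain ⟨S, hS⟩ := hS
      have hS' := move_marg l2 m v a b (by omega) hl2ab S hS
      exact ih l2' h2z' h2s' hdom' hmeas' hS'

/-- monotonicity of realizability in the first marginal. -/
theorem stmt2 (n : ℕ) (l1 l2 m v : ℕ → ℕ)
    (hl1 : IsPartition l1 n) (hl2 : IsPartition l2 n)
    (hm : IsPartition m n) (hv : IsPartition v n)
    (hdom : DomLE l1 l2)
    (h : ∃ S : Finset (ℕ × ℕ × ℕ), HasMarginals S l2 m v) :
    ∃ S : Finset (ℕ × ℕ × ℕ), HasMarginals S l1 m v := by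
  obtain ⟨h1anti, N1, hz1, hs1⟩ := hl1
  obtain ⟨h2anti, N2, hz2, hs2⟩ := hl2
  set N := max N1 N2 with hN
  have hz1' : ∀ i, N ≤ i → l1 i = 0 := fun i hi => hz1 i (le_trans (le_max_left _ _) hi)
  have hz2' : ∀ i, N ≤ i → l2 i = 0 := fun i hi => hz2 i (le_trans (le_max_right _ _) hi)
  have hs1' : ∑ i ∈ Finset.range N, l1 i = n := by
    rw [← hs1]
    exact (Finset.sum_subset (Finset.range_subset_range.2 (le_max_left _ _))
      (fun i _ hi => hz1 i (le_of_not_gt fun h => hi (Finset.mem_range.2 h)))).symm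
  have hs2' : ∑ i ∈ Finset.range N, l2 i = n := by
    rw [← hs2]
    exact (Finset.sum_subset (Finset.range_subset_range.2 (le_max_right _ _))
      (fun i _ hi => hz2 i (le_of_not_gt fun h => hi (Finset.mem_range.2 h)))).symm
  exact main_ind m v n N l1 h1anti hz1' hs1'
    (∑ k ∈ Finset.range (N+1), (∑ i ∈ Finset.range k, l2 i - ∑ i ∈ Finset.range k, l1 i))
    l2 hz2' hs2' hdom le_rfl h
end

section
/- Let λ^(1), λ^(2), μ^(1), μ^(2), ν^(1), ν^(2) be integer partitions of n with λ^(1) ⪯ λ^(2), μ^(1) ⪯ μ^(2), ν^(1) ⪯ ν^(2) in the dominance order. If (λ^(2), μ^(2), ν^(2)) admits a three-dimensional binary contingency table with those marginals, then so does (λ^(1), μ^(1), ν^(1)). -/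
open Finset

lemma card_filter_move {α : Type*} [DecidableEq α] (S : Finset α) (x y : α)
    (hy : y ∈ S) (hx : x ∉ S) (P : α → Prop) [DecidablePred P] :
    ((insert x (S.erase y)).filter P).card + (if P y then 1 else 0)
      = (S.filter P).card + (if P x then 1 else 0) := by
  have he : (S.erase y).filter P = (S.filter P).erase y := by
    ext a; simp only [mem_filter, mem_erase]; tauto
  have hxf : x ∉ (S.filter P).erase y :=
    fun h => hx (mem_filter.1 (mem_of_mem_erase h)).1
  rw [filter_insert, he]
  by_cases hPx : P x <;> by_cases hPy : P y <;> simp only [hPx, hPy, if_true, if_false]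
  · rw [card_insert_of_notMem hxf, card_erase_of_mem (by simp [mem_filter, hy, hPy])]
    have : 0 < (S.filter P).card := card_pos.2 ⟨y, by simp [mem_filter, hy, hPy]⟩
    omega
  · rw [card_insert_of_notMem hxf, erase_eq_of_notMem (by simp [mem_filter, hPy])]
  · rw [card_erase_of_mem (by simp [mem_filter, hy, hPy])]
    have : 0 < (S.filter P).card := card_pos.2 ⟨y, by simp [mem_filter, hy, hPy]⟩
    omega
  · rw [erase_eq_of_notMem (by simp [mem_filter, hPy])]

lemma move_lemma (S : Finset (ℕ × ℕ × ℕ)) (l m v : ℕ → ℕ) (s t : ℕ)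
    (h : HasMarginals S l m v) (hst : s ≠ t) (hlt : l t < l s) :
    ∃ S', HasMarginals S'
      (fun j => if j = s then l s - 1 else if j = t then l t + 1 else l j) m v := by
  obtain ⟨h1, h2, h3⟩ := h
  set A := S.filter (fun p => p.1 = s) with hA
  set B := S.filter (fun p => p.1 = t) with hB
  have hAcard : A.card = l s := h1 s
  have hBcard : B.card = l t := h1 t
  set PA := A.image (fun p => p.2) with hPA
  set PB := B.image (fun p => p.2) with hPB
  have hPAcard : PA.card = l s := by
    rw [hPA, card_image_of_injOn, hAcard]
    intro p hp q hq hpq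
    have hp1 : p.1 = s := (mem_filter.1 hp).2
    have hq1 : q.1 = s := (mem_filter.1 hq).2
    exact Prod.ext (hp1.trans hq1.symm) hpq
  have hPBcard : PB.card ≤ l t := hBcard ▸ card_image_le
  have hex : ∃ q, q ∈ PA ∧ q ∉ PB := by
    by_contra hc
    push_neg at hc
    have := card_le_card (fun q hq => hc q hq)
    omega
  obtain ⟨q, hqA, hqB⟩ := hex
  obtain ⟨p, hp, hpq⟩ := mem_image.1 hqA
  have hp1 : p.1 = s := (mem_filter.1 hp).2
  have hpS : (s, q.1, q.2) ∈ S := by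
    have hpe : p = (s, q.1, q.2) := by rw [← hp1, ← hpq]
    exact hpe ▸ (mem_filter.1 hp).1
  have htS : (t, q.1, q.2) ∉ S := by
    intro hmem
    exact hqB (mem_image.2 ⟨(t, q.1, q.2), mem_filter.2 ⟨hmem, rfl⟩, rfl⟩)
  refine ⟨insert (t, q.1, q.2) (S.erase (s, q.1, q.2)), ?_, ?_, ?_⟩
  · intro i
    have key := card_filter_move S (t, q.1, q.2) (s, q.1, q.2) hpS htS (fun p => p.1 = i)
    simp only at key
    have h1i := h1 i
    show _ = if i = s then l s - 1 else if i = t then l t + 1 else l i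
    by_cases his : i = s
    · subst his
      rw [if_pos rfl]
      rw [if_pos rfl, if_neg (fun hh : t = i => hst hh.symm)] at key
      omega
    · rw [if_neg his]
      rw [if_neg (fun hh : s = i => his hh.symm)] at key
      by_cases hit : i = t
      · subst hit
        rw [if_pos rfl]
        rw [if_pos rfl] at key
        omega
      · rw [if_neg hit]
        rw [if_neg (fun hh : t = i => hit hh.symm)] at key
        omega
  · intro j
    have key := card_filter_move S (t, q.1, q.2) (s, q.1, q.2) hpS htS (fun p => p.2.1 = j)
    simp only at key
    have h2j := h2 j
    by_cases hq1 : q.1 = j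
    · rw [if_pos hq1] at key; omega
    · rw [if_neg hq1] at key; omega
  · intro k
    have key := card_filter_move S (t, q.1, q.2) (s, q.1, q.2) hpS htS (fun p => p.2.2 = k)
    simp only at key
    have h3k := h3 k
    by_cases hq2 : q.2 = k
    · rw [if_pos hq2] at key; omega
    · rw [if_neg hq2] at key; omega

lemma step_lemma (n : ℕ) (l1 l2 : ℕ → ℕ) (N : ℕ)
    (h1a : Antitone l1) (h2a : Antitone l2)
    (h1z : ∀ i, N ≤ i → l1 i = 0) (h2z : ∀ i, N ≤ i → l2 i = 0)
    (h1s : ∑ i ∈ range N, l1 i = n) (h2s : ∑ i ∈ range N, l2 i = n)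
    (hd : DomLE l1 l2) (hne : l1 ≠ l2) :
    ∃ (s t : ℕ) (l' : ℕ → ℕ),
      s ≠ t ∧ l2 t < l2 s ∧
      l' = (fun j => if j = s then l2 s - 1 else if j = t then l2 t + 1 else l2 j) ∧
      Antitone l' ∧ (∀ i, N ≤ i → l' i = 0) ∧ (∑ i ∈ range N, l' i = n) ∧
      DomLE l1 l' ∧
      (∑ k ∈ range (N+1), ((∑ i ∈ range k, l' i) - ∑ i ∈ range k, l1 i))
        < ∑ k ∈ range (N+1), ((∑ i ∈ range k, l2 i) - ∑ i ∈ range k, l1 i) := by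
  -- a : first index where they differ
  have hexa : ∃ j, l1 j ≠ l2 j := Function.ne_iff.1 hne
  obtain ⟨a, hane, haMin⟩ : ∃ a, l1 a ≠ l2 a ∧ ∀ j, j < a → l1 j = l2 j :=
    ⟨Nat.find hexa, Nat.find_spec hexa, fun j hj => not_not.1 (Nat.find_min hexa hj)⟩
  have hpa : ∑ i ∈ range a, l1 i = ∑ i ∈ range a, l2 i :=
    Finset.sum_congr rfl (fun j hj => haMin j (mem_range.1 hj))
  have halt : l1 a < l2 a := by
    have h := hd (a + 1)
    rw [Finset.sum_range_succ, Finset.sum_range_succ, hpa] at h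
    rcases Nat.lt_or_ge (l1 a) (l2 a) with h' | h'
    · exact h'
    · exact absurd (Nat.le_antisymm (by omega) h') hane
  have haN : a < N := by
    by_contra hc
    push_neg at hc
    exact hane ((h1z a hc).trans (h2z a hc).symm)
  have hpa1 : ∑ i ∈ range (a+1), l1 i + 1 ≤ ∑ i ∈ range (a+1), l2 i := by
    rw [Finset.sum_range_succ, Finset.sum_range_succ, hpa]; omega
  -- b : first index after a where l1 > l2
  have hexb : ∃ j, a < j ∧ l2 j < l1 j := by
    by_contra hc
    push_neg at hc
    have hsum : ∑ i ∈ Finset.Ico (a+1) N, l1 i ≤ ∑ i ∈ Finset.Ico (a+1) N, l2 i :=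
      Finset.sum_le_sum (fun j hj => hc j (Finset.mem_Ico.1 hj).1)
    have hsplit1 : ∑ i ∈ range (a+1), l1 i + ∑ i ∈ Finset.Ico (a+1) N, l1 i = n := by
      rw [← h1s, Finset.range_eq_Ico, Finset.range_eq_Ico]
      exact Finset.sum_Ico_consecutive _ (Nat.zero_le _) haN
    have hsplit2 : ∑ i ∈ range (a+1), l2 i + ∑ i ∈ Finset.Ico (a+1) N, l2 i = n := by
      rw [← h2s, Finset.range_eq_Ico, Finset.range_eq_Ico]
      exact Finset.sum_Ico_consecutive _ (Nat.zero_le _) haN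
    omega
  obtain ⟨b, ⟨hab, hblt⟩, hbMin'⟩ : ∃ b, (a < b ∧ l2 b < l1 b) ∧
      ∀ j, j < b → ¬(a < j ∧ l2 j < l1 j) :=
    ⟨Nat.find hexb, Nat.find_spec hexb, fun j hj => Nat.find_min hexb hj⟩
  have hbMin : ∀ j, a < j → j < b → l1 j ≤ l2 j := by
    intro j hj1 hj2
    have := hbMin' j hj2
    by_contra hcon
    exact this ⟨hj1, by omega⟩
  have hbN : b < N := by
    by_contra hc
    push_neg at hc
    have := h1z b hc
    omega
  -- key partial-sum strict inequality on (a, b]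
  have key : ∀ k, a < k → k ≤ b → ∑ i ∈ range k, l1 i + 1 ≤ ∑ i ∈ range k, l2 i := by
    intro k hk1 hk2
    have hs1 : ∑ i ∈ range (a+1), l1 i + ∑ i ∈ Finset.Ico (a+1) k, l1 i = ∑ i ∈ range k, l1 i := by
      simp only [Finset.range_eq_Ico]
      exact Finset.sum_Ico_consecutive _ (Nat.zero_le _) hk1
    have hs2 : ∑ i ∈ range (a+1), l2 i + ∑ i ∈ Finset.Ico (a+1) k, l2 i = ∑ i ∈ range k, l2 i := by
      simp only [Finset.range_eq_Ico]
      exact Finset.sum_Ico_consecutive _ (Nat.zero_le _) hk1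
    have hmid : ∑ i ∈ Finset.Ico (a+1) k, l1 i ≤ ∑ i ∈ Finset.Ico (a+1) k, l2 i :=
      Finset.sum_le_sum (fun j hj => hbMin j (by
          have := (Finset.mem_Ico.1 hj).1; omega) (by
          have := (Finset.mem_Ico.1 hj).2; omega))
    omega
  -- s : last index in [a, b) with l2 = l2 a
  obtain ⟨s, hsb, has, hsval, hsmax⟩ :
      ∃ s, s < b ∧ a ≤ s ∧ l2 s = l2 a ∧ ∀ j, s < j → j < b → l2 j < l2 a := by
    have hsne : (((range b).filter (fun j => a ≤ j ∧ l2 j = l2 a))).Nonempty :=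
      ⟨a, by simp [mem_filter, mem_range, hab]⟩
    have hmem := mem_filter.1 (Finset.max'_mem _ hsne)
    have hsb' : ((range b).filter (fun j => a ≤ j ∧ l2 j = l2 a)).max' hsne < b :=
      mem_range.1 hmem.1
    refine ⟨_, hsb', hmem.2.1, hmem.2.2, ?_⟩
    intro j hj1 hj2
    have hle : l2 j ≤ l2 a := by
      have h2' := h2a (le_of_lt hj1)
      omega
    rcases lt_or_eq_of_le hle with h | h
    · exact h
    · exact absurd (Finset.le_max' ((range b).filter (fun j => a ≤ j ∧ l2 j = l2 a)) j (by
        simp only [mem_filter, mem_range]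
        exact ⟨hj2, by omega, h⟩)) (by omega)
  -- t : first index in (s, b] with l2 = l2 b
  obtain ⟨t, hst, htb, htval, htmin⟩ :
      ∃ t, s < t ∧ t ≤ b ∧ l2 t = l2 b ∧ ∀ j, s < j → j < t → l2 b < l2 j := by
    have htne : ((Finset.Ioc s b).filter (fun j => l2 j = l2 b)).Nonempty :=
      ⟨b, by simp [mem_filter, Finset.mem_Ioc, hsb]⟩
    have hmem := mem_filter.1 (Finset.min'_mem _ htne)
    have hio := Finset.mem_Ioc.1 hmem.1
    refine ⟨_, hio.1, hio.2, hmem.2, ?_⟩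
    intro j hj1 hj2
    have hge : l2 b ≤ l2 j := by
      have h3' := h2a (le_of_lt hj2)
      have h4' := hmem.2
      omega
    rcases lt_or_eq_of_le hge with h | h
    · exact h
    · exact absurd (Finset.min'_le ((Finset.Ioc s b).filter (fun j => l2 j = l2 b)) j (by
        simp only [mem_filter, Finset.mem_Ioc]
        exact ⟨⟨hj1, by omega⟩, h.symm⟩)) (by omega)
  -- gap of 2
  have hgap : l2 b + 2 ≤ l2 a := by
    have h1 := h1a (le_of_lt hab)
    omega
  have hgapst : l2 t + 2 ≤ l2 s := by rw [hsval, htval]; exact hgap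
  have htN : t < N := by omega
  -- the new partition
  set F := (fun j => if j = s then l2 s - 1 else if j = t then l2 t + 1 else l2 j) with hF
  have hFs : F s = l2 s - 1 := by rw [hF]; simp
  have hFt : F t = l2 t + 1 := by rw [hF]; simp [Nat.ne_of_gt hst]
  have hFother : ∀ j, j ≠ s → j ≠ t → F j = l2 j := by
    intro j hjs hjt; rw [hF]; simp [hjs, hjt]
  -- pointwise sum identity
  have hpt : ∀ j, F j + (if j = s then 1 else 0) = l2 j + (if j = t then 1 else 0) := by
    intro j
    by_cases hjs : j = s
    · rw [hjs, hFs, if_pos rfl, if_neg (Nat.ne_of_lt hst)]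
      omega
    · by_cases hjt : j = t
      · rw [hjt, hFt, if_neg (by omega : ¬ t = s), if_pos rfl]
      · rw [hFother j hjs hjt, if_neg hjs, if_neg hjt]
  -- partial sums
  have hps : ∀ k, (∑ i ∈ range k, F i) + (if s < k then 1 else 0)
      = (∑ i ∈ range k, l2 i) + (if t < k then 1 else 0) := by
    intro k
    have hsum := Finset.sum_congr rfl (fun j (_ : j ∈ range k) => hpt j)
    rw [Finset.sum_add_distrib, Finset.sum_add_distrib,
      Finset.sum_ite_eq' (range k) s (fun _ => 1),
      Finset.sum_ite_eq' (range k) t (fun _ => 1)] at hsum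
    simp only [mem_range] at hsum
    rcases Nat.lt_or_ge s k with hsk | hsk
    · rw [if_pos hsk] at hsum ⊢
      rcases Nat.lt_or_ge t k with htk | htk
      · rw [if_pos htk] at hsum ⊢; exact hsum
      · rw [if_neg (Nat.not_lt.2 htk)] at hsum ⊢; exact hsum
    · rw [if_neg (Nat.not_lt.2 hsk), if_neg (Nat.not_lt.2 (by omega : t ≥ k))] at hsum ⊢
      exact hsum
  refine ⟨s, t, F, Nat.ne_of_lt hst, by omega, hF, ?_, ?_, ?_, ?_, ?_⟩
  · -- Antitone
    apply antitone_nat_of_succ_le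
    intro j
    by_cases hjs : j = s
    · rw [hjs, hFs]
      by_cases hj1t : s + 1 = t
      · rw [hj1t, hFt]; omega
      · rw [hFother (s+1) (by omega) hj1t]
        have hs1b : s + 1 < b := by
          rcases Nat.lt_or_ge (s+1) b with h | h
          · exact h
          · exfalso
            have : t = s + 1 := by omega
            exact hj1t this.symm
        have := hsmax (s+1) (by omega) hs1b
        omega
    · by_cases hjt : j = t
      · rw [hjt, hFt, hFother (t+1) (by omega) (by omega)]
        have := h2a (by omega : t ≤ t + 1)
        omega
      · rw [hFother j hjs hjt]
        by_cases hj1s : j + 1 = s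
        · rw [hj1s, hFs]
          have h2' : l2 s ≤ l2 j := hj1s ▸ h2a (by omega : j ≤ j + 1)
          omega
        · by_cases hj1t : j + 1 = t
          · rw [hj1t, hFt]
            have hjgt : s < j := by omega
            have := htmin j hjgt (by omega)
            have h2' : l2 t = l2 b := htval
            omega
          · rw [hFother (j+1) hj1s hj1t]
            exact h2a (Nat.le_succ j)
  · -- zeros
    intro i hi
    rw [hFother i (by omega) (by omega)]
    exact h2z i hi
  · -- sum = n
    have h := hps N
    rw [if_pos (by omega : s < N), if_pos htN] at h
    omega
  · -- DomLE l1 F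
    intro k
    have hk := hps k
    have hdk := hd k
    rcases Nat.lt_or_ge s k with hsk | hsk
    · rw [if_pos hsk] at hk
      rcases Nat.lt_or_ge t k with htk | htk
      · rw [if_pos htk] at hk; omega
      · rw [if_neg (Nat.not_lt.2 htk)] at hk
        have := key k (by omega) (by omega)
        omega
    · rw [if_neg (Nat.not_lt.2 hsk), if_neg (Nat.not_lt.2 (by omega : t ≥ k))] at hk
      omega
  · -- measure decreases
    apply Finset.sum_lt_sum
    · intro k _
      have hk := hps k
      have hdk := hd k
      rcases Nat.lt_or_ge s k with hsk | hsk
      · rw [if_pos hsk] at hk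
        rcases Nat.lt_or_ge t k with htk | htk
        · rw [if_pos htk] at hk; omega
        · rw [if_neg (Nat.not_lt.2 htk)] at hk; omega
      · rw [if_neg (Nat.not_lt.2 hsk), if_neg (Nat.not_lt.2 (by omega : t ≥ k))] at hk
        omega
    · refine ⟨t, mem_range.2 (by omega), ?_⟩
      have hk := hps t
      rw [if_pos hst, if_neg (lt_irrefl t)] at hk
      have hkey := key t (by omega) htb
      omega

lemma reduce_aux (d : ℕ) : ∀ (N n : ℕ) (l1 l2 m v : ℕ → ℕ),
    Antitone l1 → Antitone l2 → (∀ i, N ≤ i → l1 i = 0) → (∀ i, N ≤ i → l2 i = 0) →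
    (∑ i ∈ range N, l1 i = n) → (∑ i ∈ range N, l2 i = n) → DomLE l1 l2 →
    (∑ k ∈ range (N+1), ((∑ i ∈ range k, l2 i) - ∑ i ∈ range k, l1 i)) ≤ d →
    (∃ S, HasMarginals S l2 m v) → ∃ S, HasMarginals S l1 m v := by
  induction d using Nat.strong_induction_on with
  | _ d ih =>
    intro N n l1 l2 m v h1a h2a h1z h2z h1s h2s hd hmeas hex
    obtain ⟨S, hS⟩ := hex
    by_cases hne : l1 = l2
    · exact ⟨S, hne ▸ hS⟩
    · obtain ⟨s, t, l', hst, hlt, hl'eq, h'a, h'z, h's, hdom', hmeas'⟩ :=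
        step_lemma n l1 l2 N h1a h2a h1z h2z h1s h2s hd hne
      obtain ⟨S', hS'⟩ := move_lemma S l2 m v s t hS hst hlt
      rw [← hl'eq] at hS'
      exact ih (∑ k ∈ range (N+1), ((∑ i ∈ range k, l' i) - ∑ i ∈ range k, l1 i))
        (lt_of_lt_of_le hmeas' hmeas) N n l1 l' m v h1a h'a h1z h'z h1s h's hdom'
        le_rfl ⟨S', hS'⟩

lemma reduce_first (n : ℕ) (l1 l2 m v : ℕ → ℕ)
    (hp1 : IsPartition l1 n) (hp2 : IsPartition l2 n) (hd : DomLE l1 l2)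
    (hex : ∃ S, HasMarginals S l2 m v) : ∃ S, HasMarginals S l1 m v := by
  obtain ⟨h1a, N1, h1z, h1s⟩ := hp1
  obtain ⟨h2a, N2, h2z, h2s⟩ := hp2
  have h1z' : ∀ i, max N1 N2 ≤ i → l1 i = 0 := fun i hi => h1z i (le_trans (le_max_left _ _) hi)
  have h2z' : ∀ i, max N1 N2 ≤ i → l2 i = 0 := fun i hi => h2z i (le_trans (le_max_right _ _) hi)
  have h1s' : ∑ i ∈ range (max N1 N2), l1 i = n := by
    rw [← h1s]
    exact (Finset.sum_subset (Finset.range_subset_range.2 (le_max_left _ _))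
      (fun x _ hx => h1z x (by simpa using hx))).symm
  have h2s' : ∑ i ∈ range (max N1 N2), l2 i = n := by
    rw [← h2s]
    exact (Finset.sum_subset (Finset.range_subset_range.2 (le_max_right _ _))
      (fun x _ hx => h2z x (by simpa using hx))).symm
  exact reduce_aux _ (max N1 N2) n l1 l2 m v h1a h2a h1z' h2z' h1s' h2s' hd le_rfl hex

lemma marg_swap12 (S : Finset (ℕ × ℕ × ℕ)) (l m v : ℕ → ℕ) (h : HasMarginals S l m v) :
    HasMarginals (S.image (fun p => (p.2.1, p.1, p.2.2))) m l v := by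
  have hinj : Function.Injective (fun p : ℕ × ℕ × ℕ => (p.2.1, p.1, p.2.2)) := by
    intro ⟨a, b, c⟩ ⟨d, e, f⟩ hh
    simp only [Prod.mk.injEq] at hh
    simp [hh.1, hh.2.1, hh.2.2]
  obtain ⟨h1, h2, h3⟩ := h
  refine ⟨fun i => ?_, fun j => ?_, fun k => ?_⟩
  · rw [Finset.filter_image, Finset.card_image_of_injective _ hinj]; exact h2 i
  · rw [Finset.filter_image, Finset.card_image_of_injective _ hinj]; exact h1 j
  · rw [Finset.filter_image, Finset.card_image_of_injective _ hinj]; exact h3 k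

lemma marg_swap13 (S : Finset (ℕ × ℕ × ℕ)) (l m v : ℕ → ℕ) (h : HasMarginals S l m v) :
    HasMarginals (S.image (fun p => (p.2.2, p.2.1, p.1))) v m l := by
  have hinj : Function.Injective (fun p : ℕ × ℕ × ℕ => (p.2.2, p.2.1, p.1)) := by
    intro ⟨a, b, c⟩ ⟨d, e, f⟩ hh
    simp only [Prod.mk.injEq] at hh
    simp [hh.1, hh.2.1, hh.2.2]
  obtain ⟨h1, h2, h3⟩ := h
  refine ⟨fun i => ?_, fun j => ?_, fun k => ?_⟩
  · rw [Finset.filter_image, Finset.card_image_of_injective _ hinj]; exact h3 i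
  · rw [Finset.filter_image, Finset.card_image_of_injective _ hinj]; exact h2 j
  · rw [Finset.filter_image, Finset.card_image_of_injective _ hinj]; exact h1 k

/-- monotonicity of realizability in all three marginals. -/
theorem stmt3 (n : ℕ) (l1 l2 m1 m2 v1 v2 : ℕ → ℕ)
    (hl1 : IsPartition l1 n) (hl2 : IsPartition l2 n)
    (hm1 : IsPartition m1 n) (hm2 : IsPartition m2 n)
    (hv1 : IsPartition v1 n) (hv2 : IsPartition v2 n)
    (hdl : DomLE l1 l2) (hdm : DomLE m1 m2) (hdv : DomLE v1 v2)
    (h : ∃ S : Finset (ℕ × ℕ × ℕ), HasMarginals S l2 m2 v2) :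
    ∃ S : Finset (ℕ × ℕ × ℕ), HasMarginals S l1 m1 v1 := by
  have h1 : ∃ S, HasMarginals S l1 m2 v2 := reduce_first n l1 l2 m2 v2 hl1 hl2 hdl h
  have h2 : ∃ S, HasMarginals S m2 l1 v2 := by
    obtain ⟨S, hS⟩ := h1; exact ⟨_, marg_swap12 S _ _ _ hS⟩
  have h3 : ∃ S, HasMarginals S m1 l1 v2 := reduce_first n m1 m2 l1 v2 hm1 hm2 hdm h2
  have h4 : ∃ S, HasMarginals S v2 l1 m1 := by
    obtain ⟨S, hS⟩ := h3; exact ⟨_, marg_swap13 S _ _ _ hS⟩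
  have h5 : ∃ S, HasMarginals S v1 l1 m1 := reduce_first n v1 v2 l1 m1 hv1 hv2 hdv h4
  obtain ⟨S, hS⟩ := h5
  exact ⟨_, marg_swap12 _ _ _ _ (marg_swap13 S _ _ _ hS)⟩
end

section
/- Let λ, μ be partitions of 3n with λ ⪯ μ in the dominance order. If there exists a 3-uniform hypergraph whose degree sequence (sorted non-increasingly) equals μ, then there exists a 3-uniform hypergraph whose degree sequence equals λ. -/
open Finset

def moveFn (m : ℕ → ℕ) (a b : ℕ) : ℕ → ℕ :=
  fun k => if k = a then m a - 1 else if k = b then m b + 1 else m k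

lemma swap_step (E : Finset (Finset ℕ)) (h3 : ∀ s ∈ E, s.card = 3) (u w : ℕ)
    (huw : u ≠ w) (hlt : hdeg E w < hdeg E u) :
    ∃ E' : Finset (Finset ℕ), (∀ s ∈ E', s.card = 3) ∧
      hdeg E' u + 1 = hdeg E u ∧ hdeg E' w = hdeg E w + 1 ∧
      ∀ x, x ≠ u → x ≠ w → hdeg E' x = hdeg E x := by
  classical
  set Du := E.filter (fun s => u ∈ s) with hDu
  set Dw := E.filter (fun s => w ∈ s) with hDw
  set A := Du.filter (fun s => w ∉ s) with hA
  set B := Dw.filter (fun s => u ∉ s) with hB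
  have hsplit_u : (Du.filter (fun s => w ∈ s)).card + A.card = Du.card := by
    rw [hA]
    exact Finset.card_filter_add_card_filter_not (p := fun s => w ∈ s)
  have hsplit_w : (Dw.filter (fun s => u ∈ s)).card + B.card = Dw.card := by
    rw [hB]
    exact Finset.card_filter_add_card_filter_not (p := fun s => u ∈ s)
  have hCC : Du.filter (fun s => w ∈ s) = Dw.filter (fun s => u ∈ s) := by
    rw [hDu, hDw, Finset.filter_filter, Finset.filter_filter]
    exact Finset.filter_congr (by intro s _; tauto)
  have hAB : B.card < A.card := by
    have h1 : hdeg E u = Du.card := rfl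
    have h2 : hdeg E w = Dw.card := rfl
    rw [hCC] at hsplit_u
    omega
  have hrec : ∀ s : Finset ℕ, u ∈ s → w ∉ s →
      insert u ((insert w (s.erase u)).erase w) = s := by
    intro s hu hw
    rw [Finset.erase_insert (by simp [Finset.mem_erase, hw]), Finset.insert_erase hu]
  have hinj : Set.InjOn (fun s : Finset ℕ => insert w (s.erase u)) (A : Set (Finset ℕ)) := by
    intro s hs t ht h
    simp only [hA, hDu, Finset.mem_coe, Finset.mem_filter] at hs ht
    have := hrec s hs.1.2 hs.2
    have h2 := hrec t ht.1.2 ht.2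
    simp only at h
    rw [← this, h, h2]
  have hex : ∃ s ∈ A, insert w (s.erase u) ∉ E := by
    by_contra hcon
    push_neg at hcon
    have himg : A.image (fun s => insert w (s.erase u)) ⊆ B := by
      intro t ht
      simp only [Finset.mem_image] at ht
      obtain ⟨s, hs, rfl⟩ := ht
      simp only [hB, hDw, Finset.mem_filter]
      refine ⟨⟨hcon s hs, Finset.mem_insert_self _ _⟩, ?_⟩
      simp [huw, Finset.mem_erase]
    have := Finset.card_le_card himg
    rw [Finset.card_image_of_injOn hinj] at this
    omega
  obtain ⟨s, hsA, htE⟩ := hex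
  simp only [hA, hDu, Finset.mem_filter] at hsA
  obtain ⟨⟨hsE, hus⟩, hws⟩ := hsA
  set t := insert w (s.erase u) with ht
  have hwt : w ∈ t := Finset.mem_insert_self _ _
  have hut : u ∉ t := by simp [ht, huw, Finset.mem_erase]
  have hcard_t : t.card = 3 := by
    rw [ht, Finset.card_insert_of_notMem (by simp [Finset.mem_erase, hws]),
      Finset.card_erase_of_mem hus, h3 s hsE]
  refine ⟨insert t (E.erase s), ?_, ?_, ?_, ?_⟩
  · intro e he
    rcases Finset.mem_insert.mp he with rfl | he
    · exact hcard_t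
    · exact h3 e (Finset.mem_of_mem_erase he)
  · -- u
    have : hdeg (insert t (E.erase s)) u = ((E.filter fun e => u ∈ e).erase s).card := by
      unfold hdeg
      rw [Finset.filter_insert, if_neg hut, Finset.filter_erase]
    rw [this, Finset.card_erase_of_mem (by simp [Finset.mem_filter, hsE, hus])]
    have : 1 ≤ (E.filter fun e => u ∈ e).card :=
      Finset.card_pos.mpr ⟨s, by simp [Finset.mem_filter, hsE, hus]⟩
    unfold hdeg
    omega
  · -- w
    have hsf : s ∉ (E.filter fun e => w ∈ e) := by simp [Finset.mem_filter, hws]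
    have htf : t ∉ ((E.filter fun e => w ∈ e).erase s) := by
      intro hc
      exact htE (Finset.mem_of_mem_filter _ (Finset.mem_of_mem_erase hc))
    unfold hdeg
    rw [Finset.filter_insert, if_pos hwt, Finset.filter_erase,
      Finset.card_insert_of_notMem htf, Finset.erase_eq_of_notMem hsf]
  · intro x hxu hxw
    have hxts : x ∈ t ↔ x ∈ s := by
      simp [ht, Finset.mem_insert, Finset.mem_erase, hxu, hxw]
    unfold hdeg
    rw [Finset.filter_insert, Finset.filter_erase]
    by_cases hxs : x ∈ s
    · rw [if_pos (hxts.mpr hxs)]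
      have htf : t ∉ ((E.filter fun e => x ∈ e).erase s) := by
        intro hc
        exact htE (Finset.mem_of_mem_filter _ (Finset.mem_of_mem_erase hc))
      rw [Finset.card_insert_of_notMem htf,
        Finset.card_erase_of_mem (by simp [Finset.mem_filter, hsE, hxs])]
      have : 1 ≤ (E.filter fun e => x ∈ e).card :=
        Finset.card_pos.mpr ⟨s, by simp [Finset.mem_filter, hsE, hxs]⟩
      omega
    · rw [if_neg (fun hc => hxs (hxts.mp hc)),
        Finset.erase_eq_of_notMem (by simp [Finset.mem_filter, hxs])]

lemma move_partition (C : ℕ) (l m : ℕ → ℕ) (hla : Antitone l) (hma : Antitone m)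
    (hl0 : ∀ i, C ≤ i → l i = 0)
    (heq : ∀ k, C ≤ k → ∑ i ∈ Finset.range k, m i = ∑ i ∈ Finset.range k, l i)
    (hdom : DomLE l m) (hne : l ≠ m) :
    ∃ a b, a < b ∧ b < C ∧ m b + 2 ≤ m a ∧
      Antitone (moveFn m a b) ∧ DomLE l (moveFn m a b) ∧
      (∀ k, k ≤ a ∨ b < k → ∑ i ∈ Finset.range k, moveFn m a b i = ∑ i ∈ Finset.range k, m i) ∧
      (∀ k, a < k → k ≤ b → (∑ i ∈ Finset.range k, moveFn m a b i) + 1 = ∑ i ∈ Finset.range k, m i) ∧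
      (∑ i ∈ Finset.range b, l i) + 1 ≤ ∑ i ∈ Finset.range b, m i := by
  classical
  have hm0 : ∀ k, C ≤ k → m k = 0 := by
    intro k hk
    have h1 := heq k hk
    have h2 := heq (k + 1) (by omega)
    rw [Finset.sum_range_succ, Finset.sum_range_succ] at h2
    have := hl0 k hk
    omega
  -- first index where they differ
  have hne' : ∃ i, l i ≠ m i := Function.ne_iff.mp hne
  obtain ⟨i0, hlt, hmin⟩ : ∃ i0, l i0 < m i0 ∧ ∀ j, j < i0 → l j = m j := by
    refine ⟨Nat.find hne', ?_, ?_⟩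
    · have hi0 : l (Nat.find hne') ≠ m (Nat.find hne') := Nat.find_spec hne'
      have hmin : ∀ j, j < Nat.find hne' → l j = m j := by
        intro j hj
        by_contra hc
        have := Nat.find_min' hne' hc
        omega
      have hpref : ∑ i ∈ Finset.range (Nat.find hne'), l i
          = ∑ i ∈ Finset.range (Nat.find hne'), m i :=
        Finset.sum_congr rfl (fun j hj => hmin j (Finset.mem_range.mp hj))
      have h1 := hdom (Nat.find hne' + 1)
      rw [Finset.sum_range_succ, Finset.sum_range_succ, hpref] at h1
      omega
    · intro j hj
      by_contra hc
      have := Nat.find_min' hne' hc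
      omega
  have hv : 1 ≤ m i0 := by omega
  have hi0C : i0 < C := by
    by_contra hc
    have := hm0 i0 (by omega)
    omega
  -- a : last index with m a = m i0
  obtain ⟨a, hi0a, haC, hmav, ha_max⟩ :
      ∃ a, i0 ≤ a ∧ a < C ∧ m a = m i0 ∧ ∀ k, m k = m i0 → k ≤ a := by
    have hSne : i0 ∈ (Finset.range C).filter (fun k => m k = m i0) := by
      simp [Finset.mem_filter, Finset.mem_range, hi0C]
    refine ⟨((Finset.range C).filter (fun k => m k = m i0)).max' ⟨i0, hSne⟩,
      Finset.le_max' _ _ hSne, ?_, ?_, ?_⟩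
    · have hmem := Finset.max'_mem ((Finset.range C).filter (fun k => m k = m i0)) ⟨i0, hSne⟩
      simp only [Finset.mem_filter, Finset.mem_range] at hmem
      exact hmem.1
    · have hmem := Finset.max'_mem ((Finset.range C).filter (fun k => m k = m i0)) ⟨i0, hSne⟩
      simp only [Finset.mem_filter, Finset.mem_range] at hmem
      exact hmem.2
    · intro k hk
      by_cases hkC : k < C
      · exact Finset.le_max' _ _ (by simp [Finset.mem_filter, Finset.mem_range, hkC, hk])
      · have := hm0 k (by omega); omega
  have hgt : ∀ t, a < t → m t < m i0 := by
    intro t ht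
    have h1 : m t ≤ m a := hma (le_of_lt ht)
    rcases Nat.lt_or_ge (m t) (m i0) with h | h
    · exact h
    · have h2 : m t = m i0 := by omega
      have := ha_max t h2
      omega
  -- sandwich
  have hsand : ∀ t, i0 ≤ t → t ≤ a → m t = m i0 := by
    intro t h1 h2
    have ha1 : m t ≤ m i0 := hma h1
    have ha2 : m a ≤ m t := hma h2
    omega
  -- b0 : some index with m < l
  have hexb : ∃ k, m k < l k := by
    by_contra hc
    push_neg at hc
    have hsum := heq C (le_refl C)
    have hall := (Finset.sum_eq_sum_iff_of_le (fun i (_ : i ∈ Finset.range C) => hc i)).mp hsum.symm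
    apply hne
    funext i
    by_cases hiC : i < C
    · exact hall i (Finset.mem_range.mpr hiC)
    · rw [hl0 i (by omega), hm0 i (by omega)]
  -- b
  obtain ⟨b, hb1, hbC, hb2, hmid⟩ :
      ∃ b, a < b ∧ b < C ∧ m b + 2 ≤ m i0 ∧ ∀ t, a < t → t < b → m i0 ≤ m t + 1 := by
    obtain ⟨b0, hb0⟩ := hexb
    have hb0i0 : i0 < b0 := by
      rcases Nat.lt_trichotomy i0 b0 with h | h | h
      · exact h
      · rw [h] at hlt; omega
      · have := hmin b0 h; omega
    have hkey : m b0 + 2 ≤ m i0 := by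
      have h1 : l b0 ≤ l i0 := hla (le_of_lt hb0i0)
      omega
    have hb0a : a < b0 := by
      by_contra hc
      push_neg at hc
      have hx : m a ≤ m b0 := hma hc
      omega
    have hexb2 : ∃ k, a < k ∧ m k + 2 ≤ m i0 := ⟨b0, hb0a, hkey⟩
    refine ⟨Nat.find hexb2, (Nat.find_spec hexb2).1, ?_, (Nat.find_spec hexb2).2, ?_⟩
    · have hb0C : b0 < C := by
        by_contra hc
        push_neg at hc
        have := hl0 b0 hc
        omega
      have := Nat.find_min' hexb2 ⟨hb0a, hkey⟩
      omega
    · intro t h1 h2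
      have h3 := Nat.find_min hexb2 h2
      push_neg at h3
      have := h3 h1
      omega
  have hab : a ≠ b := by omega
  -- values of moveFn
  have hva : moveFn m a b a = m a - 1 := by simp [moveFn]
  have hvb : moveFn m a b b = m b + 1 := by simp [moveFn, hab.symm]
  have hvo : ∀ k, k ≠ a → k ≠ b → moveFn m a b k = m k := by
    intro k h1 h2; simp [moveFn, h1, h2]
  -- prefix formulas
  have P1 : ∀ k, k ≤ a → ∑ i ∈ Finset.range k, moveFn m a b i = ∑ i ∈ Finset.range k, m i := by
    intro k hk
    refine Finset.sum_congr rfl (fun i hi => ?_)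
    rw [Finset.mem_range] at hi
    exact hvo i (by omega) (by omega)
  have P2 : ∀ k, a < k → k ≤ b →
      (∑ i ∈ Finset.range k, moveFn m a b i) + 1 = ∑ i ∈ Finset.range k, m i := by
    intro k h1 h2
    have ha_in : a ∈ Finset.range k := Finset.mem_range.mpr (by omega)
    rw [← Finset.sum_erase_add _ _ ha_in, ← Finset.sum_erase_add _ m ha_in]
    have hcongr : ∑ i ∈ (Finset.range k).erase a, moveFn m a b i
        = ∑ i ∈ (Finset.range k).erase a, m i := by
      refine Finset.sum_congr rfl (fun i hi => ?_)
      rw [Finset.mem_erase, Finset.mem_range] at hi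
      exact hvo i hi.1 (by omega)
    rw [hcongr, hva]
    omega
  have P3 : ∀ k, b < k → ∑ i ∈ Finset.range k, moveFn m a b i = ∑ i ∈ Finset.range k, m i := by
    intro k hk
    have ha_in : a ∈ Finset.range k := Finset.mem_range.mpr (by omega)
    have hb_in : b ∈ (Finset.range k).erase a := by
      rw [Finset.mem_erase, Finset.mem_range]; exact ⟨hab.symm, by omega⟩
    rw [← Finset.sum_erase_add _ _ ha_in, ← Finset.sum_erase_add _ m ha_in,
      ← Finset.sum_erase_add _ _ hb_in, ← Finset.sum_erase_add _ m hb_in]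
    have hcongr : ∑ i ∈ ((Finset.range k).erase a).erase b, moveFn m a b i
        = ∑ i ∈ ((Finset.range k).erase a).erase b, m i := by
      refine Finset.sum_congr rfl (fun i hi => ?_)
      rw [Finset.mem_erase, Finset.mem_erase] at hi
      exact hvo i hi.2.1 hi.1
    rw [hcongr, hva, hvb]
    omega
  -- strict prefix dominance on (i0, b]
  have Pstrict : ∀ k, i0 < k → k ≤ b →
      (∑ i ∈ Finset.range k, l i) + 1 ≤ ∑ i ∈ Finset.range k, m i := by
    intro k h1 h2
    have hsplit_l : ∑ i ∈ Finset.range (i0+1), l i + ∑ i ∈ Finset.Ico (i0+1) k, l i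
        = ∑ i ∈ Finset.range k, l i := by
      simp only [Finset.range_eq_Ico]
      exact Finset.sum_Ico_consecutive _ (by omega) (by omega)
    have hsplit_m : ∑ i ∈ Finset.range (i0+1), m i + ∑ i ∈ Finset.Ico (i0+1) k, m i
        = ∑ i ∈ Finset.range k, m i := by
      simp only [Finset.range_eq_Ico]
      exact Finset.sum_Ico_consecutive _ (by omega) (by omega)
    have hpref : ∑ i ∈ Finset.range i0, l i = ∑ i ∈ Finset.range i0, m i :=
      Finset.sum_congr rfl (fun j hj => hmin j (Finset.mem_range.mp hj))
    have hhead : (∑ i ∈ Finset.range (i0+1), l i) + 1 ≤ ∑ i ∈ Finset.range (i0+1), m i := by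
      rw [Finset.sum_range_succ, Finset.sum_range_succ, hpref]
      omega
    have htail : ∑ i ∈ Finset.Ico (i0+1) k, l i ≤ ∑ i ∈ Finset.Ico (i0+1) k, m i := by
      refine Finset.sum_le_sum (fun t hti => ?_)
      rw [Finset.mem_Ico] at hti
      have hli : l t ≤ l i0 := hla (by omega)
      by_cases hta : t ≤ a
      · have := hsand t (by omega) hta
        omega
      · have := hmid t (by omega) (by omega)
        omega
    omega
  refine ⟨a, b, hb1, hbC, by omega, ?_, ?_, ?_, P2, Pstrict b (by omega) (le_refl b)⟩
  · -- Antitone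
    apply antitone_nat_of_succ_le
    intro k
    rcases Nat.lt_trichotomy k a with h | h | h
    · -- k < a
      rcases Nat.lt_or_ge (k+1) a with h' | h'
      · rw [hvo k (by omega) (by omega), hvo (k+1) (by omega) (by omega)]
        exact hma (by omega)
      · have hk1a : k + 1 = a := by omega
        rw [hvo k (by omega) (by omega), hk1a, hva]
        have : m a ≤ m k := hma (by omega)
        omega
    · -- k = a
      rw [h, hva]
      by_cases hb' : a + 1 = b
      · rw [hb', hvb]; omega
      · rw [hvo (a+1) (by omega) hb']
        have := hgt (a+1) (by omega)
        omega
    · -- a < k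
      by_cases hkb : k = b
      · rw [hkb, hvb, hvo (b+1) (by omega) (by omega)]
        have : m (b+1) ≤ m b := hma (by omega)
        omega
      · rcases Nat.lt_or_ge k b with h' | h'
        · -- a < k < b
          rw [hvo k (by omega) hkb]
          have hmk := hmid k h h'
          by_cases hb' : k + 1 = b
          · rw [hb', hvb]; omega
          · rw [hvo (k+1) (by omega) hb']
            exact hma (by omega)
        · -- k > b
          rw [hvo k (by omega) (by omega), hvo (k+1) (by omega) (by omega)]
          exact hma (by omega)
  · -- DomLE
    intro k
    rcases Nat.lt_or_ge a k with h | h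
    · rcases Nat.lt_or_ge b k with h' | h'
      · rw [P3 k h']; exact hdom k
      · have hh1 := P2 k h (by omega)
        have hh2 := Pstrict k (by omega) (by omega)
        omega
    · rw [P1 k h]; exact hdom k
  · intro k hk
    rcases hk with h | h
    · exact P1 k h
    · exact P3 k h

lemma main_ind_s5 (C : ℕ) (l : ℕ → ℕ) (hla : Antitone l) (hl0 : ∀ i, C ≤ i → l i = 0) :
    ∀ M : ℕ, ∀ m : ℕ → ℕ, Antitone m →
      (∀ k, C ≤ k → ∑ i ∈ Finset.range k, m i = ∑ i ∈ Finset.range k, l i) →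
      DomLE l m →
      (∑ k ∈ Finset.range C, (∑ i ∈ Finset.range k, m i - ∑ i ∈ Finset.range k, l i)) ≤ M →
      (∃ E : Finset (Finset ℕ), (∀ e ∈ E, e.card = 3) ∧ DegSeqOf E m) →
      (∃ E : Finset (Finset ℕ), (∀ e ∈ E, e.card = 3) ∧ DegSeqOf E l) := by
  intro M
  induction M with
  | zero =>
    intro m hma heq hdom hmeas hE
    -- measure zero forces l = m
    have hpre : ∀ k, k < C → ∑ i ∈ Finset.range k, m i = ∑ i ∈ Finset.range k, l i := by
      intro k hk
      have h1 : (∑ i ∈ Finset.range k, m i - ∑ i ∈ Finset.range k, l i) = 0 := by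
        have := Finset.single_le_sum
          (f := fun k => ∑ i ∈ Finset.range k, m i - ∑ i ∈ Finset.range k, l i)
          (fun i _ => Nat.zero_le _) (Finset.mem_range.mpr hk)
        have h2 : (∑ i ∈ Finset.range k, m i - ∑ i ∈ Finset.range k, l i)
            ≤ ∑ k ∈ Finset.range C, (∑ i ∈ Finset.range k, m i - ∑ i ∈ Finset.range k, l i) := this
        omega
      have := hdom k
      omega
    have : l = m := by
      funext i
      have h1 : ∑ j ∈ Finset.range i, m j = ∑ j ∈ Finset.range i, l j := by
        rcases Nat.lt_or_ge i C with h | h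
        · exact hpre i h
        · exact heq i h
      have h2 : ∑ j ∈ Finset.range (i+1), m j = ∑ j ∈ Finset.range (i+1), l j := by
        rcases Nat.lt_or_ge (i+1) C with h | h
        · exact hpre (i+1) h
        · exact heq (i+1) h
      rw [Finset.sum_range_succ, Finset.sum_range_succ] at h2
      omega
    rw [this]
    exact hE
  | succ M ih =>
    intro m hma heq hdom hmeas hE
    by_cases hlm : l = m
    · rw [hlm]; exact hE
    · obtain ⟨a, b, hab, hbC, hval, hnu_anti, hnu_dom, hP13, hP2, hstrict⟩ :=
        move_partition C l m hla hma hl0 heq hdom hlm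
      -- transfer realizability
      obtain ⟨E, h3, e, he⟩ := hE
      have huw : e a ≠ e b := by
        intro hc
        exact absurd (e.injective hc) (by omega)
      have hdu : hdeg E (e a) = m a := he a
      have hdw : hdeg E (e b) = m b := he b
      have hlt : hdeg E (e b) < hdeg E (e a) := by omega
      obtain ⟨E', h3', hdu', hdw', hoth⟩ := swap_step E h3 (e a) (e b) huw hlt
      have hE' : ∃ E : Finset (Finset ℕ), (∀ e ∈ E, e.card = 3) ∧ DegSeqOf E (moveFn m a b) := by
        refine ⟨E', h3', e, fun v => ?_⟩
        by_cases hva : v = a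
        · rw [hva]
          have hx : moveFn m a b a = m a - 1 := by simp [moveFn]
          rw [hx]
          omega
        · by_cases hvb : v = b
          · rw [hvb]
            have hx : moveFn m a b b = m b + 1 := by simp [moveFn, (show b ≠ a by omega)]
            rw [hx]
            omega
          · rw [hoth (e v) (fun hc => hva (e.injective hc)) (fun hc => hvb (e.injective hc)),
              he v]
            simp [moveFn, hva, hvb]
      -- new equalities beyond C
      have heq' : ∀ k, C ≤ k →
          ∑ i ∈ Finset.range k, moveFn m a b i = ∑ i ∈ Finset.range k, l i := by
        intro k hk
        rw [hP13 k (Or.inr (by omega))]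
        exact heq k hk
      -- measure decrease
      have hmono : ∀ k, ∑ i ∈ Finset.range k, moveFn m a b i ≤ ∑ i ∈ Finset.range k, m i := by
        intro k
        rcases Nat.lt_or_ge a k with h | h
        · rcases Nat.lt_or_ge b k with h' | h'
          · rw [hP13 k (Or.inr h')]
          · have := hP2 k h h'
            omega
        · rw [hP13 k (Or.inl h)]
      have hmeas' : (∑ k ∈ Finset.range C,
          (∑ i ∈ Finset.range k, moveFn m a b i - ∑ i ∈ Finset.range k, l i)) ≤ M := by
        have hlt2 : (∑ k ∈ Finset.range C,
            (∑ i ∈ Finset.range k, moveFn m a b i - ∑ i ∈ Finset.range k, l i))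
            < ∑ k ∈ Finset.range C, (∑ i ∈ Finset.range k, m i - ∑ i ∈ Finset.range k, l i) := by
          refine Finset.sum_lt_sum (fun k _ => by have := hmono k; omega) ⟨b, Finset.mem_range.mpr hbC, ?_⟩
          have h1 := hP2 b hab (le_refl b)
          omega
        omega
      exact ih (moveFn m a b) hnu_anti heq' hnu_dom hmeas' hE'

lemma sum_range_of_support (f : ℕ → ℕ) (N : ℕ) (h0 : ∀ i, N ≤ i → f i = 0) {k : ℕ} (hk : N ≤ k) :
    ∑ i ∈ Finset.range k, f i = ∑ i ∈ Finset.range N, f i := by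
  refine (Finset.sum_subset (Finset.range_subset_range.mpr hk) ?_).symm
  intro i _ hi
  rw [Finset.mem_range] at hi
  exact h0 i (by omega)

/-- monotonicity of hypergraph realizability under dominance. -/
theorem stmt5 (n : ℕ) (l m : ℕ → ℕ)
    (hl : IsPartition l (3 * n)) (hm : IsPartition m (3 * n))
    (hdom : DomLE l m)
    (h : ∃ E : Finset (Finset ℕ), (∀ e ∈ E, e.card = 3) ∧ DegSeqOf E m) :
    ∃ E : Finset (Finset ℕ), (∀ e ∈ E, e.card = 3) ∧ DegSeqOf E l := by
  obtain ⟨hla, Nl, hNl, hsuml⟩ := hl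
  obtain ⟨hma, Nm, hNm, hsumm⟩ := hm
  set C := max Nl Nm with hC
  have hl0 : ∀ i, C ≤ i → l i = 0 := fun i hi => hNl i (le_trans (le_max_left _ _) hi)
  have heq : ∀ k, C ≤ k → ∑ i ∈ Finset.range k, m i = ∑ i ∈ Finset.range k, l i := by
    intro k hk
    rw [sum_range_of_support m Nm hNm (le_trans (le_max_right _ _) hk),
      sum_range_of_support l Nl hNl (le_trans (le_max_left _ _) hk), hsuml, hsumm]
  exact main_ind_s5 C l hla hl0
    (∑ k ∈ Finset.range C, (∑ i ∈ Finset.range k, m i - ∑ i ∈ Finset.range k, l i))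
    m hma heq hdom (le_refl _) h
end

section
/- Let M be a three-dimensional binary pyramid with marginals (λ, μ, ν), and let ρ be the partition obtained by sorting the column heights (Σ_k M(i,j,k))_{i,j} in non-increasing order. Then ρ equals ν', the conjugate of ν. -/
open Finset

lemma downclosed_finset (K : Finset ℕ) (h : ∀ a ∈ K, ∀ b, b ≤ a → b ∈ K) :
    K = Finset.range K.card := by
  ext k
  simp only [Finset.mem_range]
  constructor
  · intro hk
    have hsub : Finset.range (k + 1) ⊆ K := by
      intro b hb
      exact h k hk b (Nat.lt_succ_iff.mp (Finset.mem_range.mp hb))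
    have := Finset.card_le_card hsub
    simpa using this
  · intro hk
    by_contra hkK
    have hsub : K ⊆ Finset.range k := by
      intro a ha
      rw [Finset.mem_range]
      by_contra hak
      exact hkK (h a ha k (Nat.le_of_not_lt hak))
    have := Finset.card_le_card hsub
    simp only [Finset.card_range] at this
    omega

lemma lowerset_eq_Iio (A : Set ℕ) (hfin : A.Finite)
    (hlow : ∀ a ∈ A, ∀ b, b ≤ a → b ∈ A) : A = Set.Iio A.ncard := by
  have hK : hfin.toFinset = Finset.range hfin.toFinset.card := by
    apply downclosed_finset
    intro a ha b hb
    rw [Set.Finite.mem_toFinset] at ha ⊢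
    exact hlow a ha b hb
  have hA : A = ↑(Finset.range hfin.toFinset.card) := by
    rw [← hK, Set.Finite.coe_toFinset]
  have hn : A.ncard = hfin.toFinset.card := Set.ncard_eq_toFinset_card A hfin
  rw [hn, ← Finset.coe_range, ← hK, Set.Finite.coe_toFinset]

/-- in a pyramid, the sorted column heights give the conjugate of
the third marginal. -/
theorem stmt6 (S : Finset (ℕ × ℕ × ℕ)) (hpyr : IsPyramid S)
    (l m v rho : ℕ → ℕ) (hM : HasMarginals S l m v)
    (hrho : Antitone rho) (g : ℕ ≃ ℕ × ℕ)
    (hg : ∀ r, rho r =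
      (S.filter fun p => p.1 = (g r).1 ∧ p.2.1 = (g r).2).card) :
    ∀ r, rho r = conj v r := by
  obtain ⟨hl, hm, hv⟩ := hM
  set h : ℕ × ℕ → ℕ := fun p => (S.filter fun q => q.1 = p.1 ∧ q.2.1 = p.2).card with hhdef
  have hrho' : ∀ r, rho r = h (g r) := hg
  -- Step 1: membership in a column is determined by the column height
  have key : ∀ a b k : ℕ, ((a, b, k) ∈ S ↔ k + 1 ≤ h (a, b)) := by
    intro a b k
    set K : Finset ℕ := (S.filter fun q => q.1 = a ∧ q.2.1 = b).image (fun q => q.2.2) with hKdef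
    have hmemK : ∀ c, c ∈ K ↔ (a, b, c) ∈ S := by
      intro c
      simp only [hKdef, Finset.mem_image, Finset.mem_filter]
      constructor
      · rintro ⟨⟨x, y, z⟩, ⟨hqS, h1, h2⟩, h3⟩
        simp only at h1 h2 h3
        subst h1; subst h2; subst h3
        exact hqS
      · intro hc
        exact ⟨(a, b, c), ⟨hc, rfl, rfl⟩, rfl⟩
    have hcard : K.card = h (a, b) := by
      rw [hKdef]
      apply Finset.card_image_of_injOn
      rintro ⟨x1, y1, z1⟩ hx ⟨x2, y2, z2⟩ hy hz
      simp only [Finset.mem_coe, Finset.mem_filter] at hx hy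
      simp only at hz
      obtain ⟨_, h1, h2⟩ := hx
      obtain ⟨_, h3, h4⟩ := hy
      simp_all
    have hdc : ∀ c ∈ K, ∀ b', b' ≤ c → b' ∈ K := by
      intro c hc b' hb'
      rw [hmemK] at hc ⊢
      exact hpyr a b b' a b c le_rfl le_rfl hb' hc
    have hKr := downclosed_finset K hdc
    rw [← hmemK k, hKr, Finset.mem_range, hcard]
    omega
  -- Step 2: v k counts the columns of height ≥ k+1
  set T : Finset (ℕ × ℕ) := S.image (fun q => (q.1, q.2.1)) with hTdef
  set F : ℕ → Finset (ℕ × ℕ) := fun k => T.filter (fun p => k + 1 ≤ h p) with hFdef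
  have hvF : ∀ k, v k = (F k).card := by
    intro k
    rw [← hv k]
    apply Finset.card_bij (fun q _ => (q.1, q.2.1))
    · rintro ⟨a, b, c⟩ hq
      simp only [Finset.mem_filter] at hq
      obtain ⟨hqS, hc⟩ := hq
      subst hc
      simp only [hFdef, Finset.mem_filter]
      refine ⟨Finset.mem_image.mpr ⟨(a, b, _), hqS, rfl⟩, (key a b _).mp hqS⟩
    · rintro ⟨a1, b1, c1⟩ h1 ⟨a2, b2, c2⟩ h2 heq
      simp only [Finset.mem_filter] at h1 h2
      simp only [Prod.mk.injEq] at heq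
      obtain ⟨_, hc1⟩ := h1
      obtain ⟨_, hc2⟩ := h2
      simp_all
    · rintro ⟨a, b⟩ hp
      simp only [hFdef, Finset.mem_filter] at hp
      exact ⟨(a, b, k), Finset.mem_filter.mpr ⟨(key a b k).mpr hp.2, rfl⟩, rfl⟩
  have hsetF : ∀ k, {p : ℕ × ℕ | k + 1 ≤ h p} = ↑(F k) := by
    intro k
    ext ⟨a, b⟩
    simp only [Set.mem_setOf_eq, hFdef, Finset.coe_filter, Set.mem_setOf_eq]
    constructor
    · intro hle
      refine ⟨?_, hle⟩
      have h0 : (a, b, 0) ∈ S := (key a b 0).mpr (by omega)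
      exact Finset.mem_image.mpr ⟨(a, b, 0), h0, rfl⟩
    · exact fun hx => hx.2
  -- v is antitone and eventually zero
  have hvanti : ∀ k k', k ≤ k' → v k' ≤ v k := by
    intro k k' hkk
    rw [hvF, hvF]
    apply Finset.card_le_card
    intro p hp
    simp only [hFdef, Finset.mem_filter] at hp ⊢
    exact ⟨hp.1, by omega⟩
  have hvzero : ∀ k, S.card ≤ k → v k = 0 := by
    intro k hk
    rw [hvF, Finset.card_eq_zero, Finset.filter_eq_empty_iff]
    intro p _
    have hle : h p ≤ S.card := Finset.card_filter_le _ _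
    omega
  -- Step 3: {k | v k ≥ r+1} = Iio (conj v r)
  have hAr : ∀ r, {k | r + 1 ≤ v k} = Set.Iio (conj v r) := by
    intro r
    have hfinA : {k | r + 1 ≤ v k}.Finite := by
      apply Set.Finite.subset (Set.finite_Iio S.card)
      intro k hk
      simp only [Set.mem_setOf_eq] at hk
      simp only [Set.mem_Iio]
      by_contra hc
      have := hvzero k (Nat.le_of_not_lt hc)
      omega
    have := lowerset_eq_Iio _ hfinA (by
      intro a ha b hb
      simp only [Set.mem_setOf_eq] at ha ⊢
      exact le_trans ha (hvanti b a hb))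
    exact this
  -- Step 4: {r' | rho r' ≥ k+1} = Iio (v k)
  have hBk : ∀ k, {r' | k + 1 ≤ rho r'} = Set.Iio (v k) := by
    intro k
    have himg : {r' | k + 1 ≤ rho r'} = ⇑g ⁻¹' {p | k + 1 ≤ h p} := by
      ext r'
      simp only [Set.mem_setOf_eq, Set.mem_preimage, hrho' r']
    have hfinS : {p : ℕ × ℕ | k + 1 ≤ h p}.Finite := by
      rw [hsetF k]; exact (F k).finite_toSet
    have hfinB : {r' | k + 1 ≤ rho r'}.Finite := by
      rw [himg]
      exact hfinS.preimage (g.injective.injOn)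
    have hpre : ⇑g ⁻¹' {p | k + 1 ≤ h p} = ⇑g.symm '' {p | k + 1 ≤ h p} := by
      rw [Equiv.image_eq_preimage_symm g.symm, Equiv.symm_symm]
    have hcardB : {r' | k + 1 ≤ rho r'}.ncard = v k := by
      rw [himg, hpre, Set.ncard_image_of_injective _ g.symm.injective,
        hsetF k, Set.ncard_coe_finset, hvF]
    have := lowerset_eq_Iio _ hfinB (by
      intro a ha b hb
      simp only [Set.mem_setOf_eq] at ha ⊢
      exact le_trans ha (hrho hb))
    rwa [hcardB] at this
  -- Conclusion
  intro r
  have h1 := Set.ext_iff.mp (hBk (conj v r)) r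
  have h2 := Set.ext_iff.mp (hBk (rho r)) r
  have h3 := Set.ext_iff.mp (hAr r) (conj v r)
  have h4 := Set.ext_iff.mp (hAr r) (rho r)
  simp only [Set.mem_setOf_eq, Set.mem_Iio] at h1 h2 h3 h4
  omega
end

section
/- Let M be a three-dimensional binary pyramid with Σ M(i,j,k) = n and marginals (λ, μ, ν). Then ν' ⪯ λ in the dominance order, where ν' is the conjugate partition of ν. -/
open Finset

/-- in a pyramid, `ν' ⪯ λ`. -/
theorem stmt7 (n : ℕ) (S : Finset (ℕ × ℕ × ℕ)) (hpyr : IsPyramid S)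
    (l m v : ℕ → ℕ) (hM : HasMarginals S l m v) (hn : S.card = n) :
    DomLE (conj v) l := by
  obtain ⟨hl, hm, hv⟩ := hM
  intro K
  classical
  set T : Finset ℕ := S.image (fun p => p.2.2) with hT
  have hconj : ∀ r, conj v r = (T.filter fun k => r + 1 ≤ v k).card := by
    intro r
    have hset : {j | r + 1 ≤ v j} = ↑(T.filter fun k => r + 1 ≤ v k) := by
      ext k
      simp only [Set.mem_setOf_eq, Finset.coe_filter, Finset.mem_image, hT]
      constructor
      · intro h
        refine ⟨?_, h⟩
        have hpos : 0 < (S.filter fun p => p.2.2 = k).card := by rw [hv]; omega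
        obtain ⟨p, hp⟩ := Finset.card_pos.mp hpos
        simp only [Finset.mem_filter] at hp
        exact ⟨p, hp.1, hp.2⟩
      · exact fun h => h.2
    rw [conj, hset, Set.ncard_coe_finset]
  -- LHS = ∑_{k ∈ T} min (v k) K
  have hLHS : ∑ r ∈ Finset.range K, conj v r = ∑ k ∈ T, min (v k) K := by
    have : ∀ r, (T.filter fun k => r + 1 ≤ v k).card
        = ∑ k ∈ T, if r + 1 ≤ v k then 1 else 0 := by
      intro r; rw [Finset.card_filter]
    simp only [hconj, this]
    rw [Finset.sum_comm]
    refine Finset.sum_congr rfl fun k _ => ?_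
    have : ((Finset.range K).filter fun r => r + 1 ≤ v k)
        = Finset.range (min (v k) K) := by
      ext r; simp only [Finset.mem_filter, Finset.mem_range]; omega
    rw [← Finset.card_filter, this, Finset.card_range]
  -- RHS = card of S restricted to p.1 < K
  have hRHS : (S.filter fun p => p.1 < K).card ≤ ∑ i ∈ Finset.range K, l i := by
    have hsplit : (S.filter fun p => p.1 < K)
        = (Finset.range K).biUnion (fun i => S.filter fun p => p.1 = i) := by
      ext p
      simp only [Finset.mem_filter, Finset.mem_biUnion, Finset.mem_range]
      constructor
      · rintro ⟨hp, hK⟩; exact ⟨p.1, hK, hp, rfl⟩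
      · rintro ⟨i, hiK, hp, rfl⟩; exact ⟨hp, hiK⟩
    rw [hsplit]
    calc ((Finset.range K).biUnion (fun i => S.filter fun p => p.1 = i)).card
        ≤ ∑ i ∈ Finset.range K, (S.filter fun p => p.1 = i).card :=
          Finset.card_biUnion_le
      _ = ∑ i ∈ Finset.range K, l i := by
          refine Finset.sum_congr rfl fun i _ => hl i
  -- split the middle by k
  have hmid : (S.filter fun p => p.1 < K)
      = T.biUnion (fun k => S.filter fun p => p.1 < K ∧ p.2.2 = k) := by
    ext p
    simp only [Finset.mem_filter, Finset.mem_biUnion, Finset.mem_image, hT]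
    constructor
    · rintro ⟨hp, hK⟩; exact ⟨p.2.2, ⟨p, hp, rfl⟩, hp, hK, rfl⟩
    · rintro ⟨k, _, hp, hK, _⟩; exact ⟨hp, hK⟩
  have hdisj : ∀ k1 ∈ T, ∀ k2 ∈ T, k1 ≠ k2 →
      Disjoint (S.filter fun p => p.1 < K ∧ p.2.2 = k1)
        (S.filter fun p => p.1 < K ∧ p.2.2 = k2) := by
    intro k1 _ k2 _ hne
    rw [Finset.disjoint_left]
    intro p hp1 hp2
    simp only [Finset.mem_filter] at hp1 hp2
    exact hne (hp1.2.2 ▸ hp2.2.2)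
  have hcardmid : (S.filter fun p => p.1 < K).card
      = ∑ k ∈ T, (S.filter fun p => p.1 < K ∧ p.2.2 = k).card := by
    rw [hmid, Finset.card_biUnion hdisj]
  -- key per-slice bound
  have key : ∀ k ∈ T, min (v k) K ≤ (S.filter fun p => p.1 < K ∧ p.2.2 = k).card := by
    intro k _
    by_cases hall : ∀ p ∈ S.filter (fun p => p.2.2 = k), p.1 < K
    · have heq : (S.filter fun p => p.1 < K ∧ p.2.2 = k)
          = S.filter fun p => p.2.2 = k := by
        ext p
        simp only [Finset.mem_filter]
        exact ⟨fun h => ⟨h.1, h.2.2⟩,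
          fun h => ⟨h.1, hall p (Finset.mem_filter.mpr h), h.2⟩⟩
      rw [heq, hv]
      exact min_le_left _ _
    · push_neg at hall
      obtain ⟨p, hp, hpK⟩ := hall
      simp only [Finset.mem_filter] at hp
      have hsub : ∀ i < K, (i, 0, k) ∈ S.filter fun q => q.1 < K ∧ q.2.2 = k := by
        intro i hi
        refine Finset.mem_filter.mpr ⟨?_, hi, rfl⟩
        have hle : k ≤ p.2.2 := le_of_eq hp.2.symm
        exact hpyr i 0 k p.1 p.2.1 p.2.2 (by omega) (Nat.zero_le _) hle
          (by simpa using hp.1)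
      have hK : K ≤ (S.filter fun q => q.1 < K ∧ q.2.2 = k).card := by
        have := Finset.card_le_card_of_injOn (fun i => (i, (0 : ℕ), k))
          (fun i hi => hsub i (Finset.mem_range.mp hi))
          (fun a _ b _ h => by simpa using h)
        simpa using this
      exact le_trans (min_le_right _ _) hK
  calc ∑ r ∈ Finset.range K, conj v r = ∑ k ∈ T, min (v k) K := hLHS
    _ ≤ ∑ k ∈ T, (S.filter fun p => p.1 < K ∧ p.2.2 = k).card :=
        Finset.sum_le_sum key
    _ = (S.filter fun p => p.1 < K).card := hcardmid.symm
    _ ≤ ∑ i ∈ Finset.range K, l i := hRHS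
end
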